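/- Let n ∈ ℝ² be a unit vector and t = (n₂, −n₁) its rotation by −π/2. Let A⁺, A⁻ be real 2×2 matrices, q⁺, q⁻ ∈ ℝ and g ∈ ℝ². Assume σ(1, A⁺, q⁺) n − σ(1, A⁻, q⁻) n = g, A⁺ t = A⁻ t, and tr A⁺ = tr A⁻. Then ⟨n, (A⁺ − A⁻) n⟩ = 0, ⟨n, (A⁺ − A⁻) t⟩ = 0, ⟨t, (A⁺ − A⁻) n⟩ = ⟨g, t⟩, ⟨t, (A⁺ − A⁻) t⟩ = 0, and q⁺ − q⁻ = −⟨g, n⟩. -/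
import Mathlib


open MeasureTheory

noncomputable section

namespace StokesIFE

/-- Euclidean inner product on `ℝ²`. -/
def dot (x y : Fin 2 → ℝ) : ℝ := x 0 * y 0 + x 1 * y 1

/-- Euclidean length of a vector of `ℝ²`. -/
def len (x : Fin 2 → ℝ) : ℝ := Real.sqrt (dot x x)

/-- Strain tensor `ε(A) = (A + Aᵀ)/2`. -/
def eps (A : Matrix (Fin 2) (Fin 2) ℝ) : Matrix (Fin 2) (Fin 2) ℝ :=
  (2⁻¹ : ℝ) • (A + A.transpose)

/-- Cauchy stress tensor `σ(μ, A, q) = 2 μ ε(A) − q I₂`. -/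
def sig (μ : ℝ) (A : Matrix (Fin 2) (Fin 2) ℝ) (q : ℝ) : Matrix (Fin 2) (Fin 2) ℝ :=
  (2 * μ) • eps A - q • (1 : Matrix (Fin 2) (Fin 2) ℝ)

/-- the jump identities satisfied by the Jacobians `A±` and pressures `q±`
of a piecewise-affine velocity / piecewise-constant pressure pair whose Cauchy stress jump
across a line with unit normal `n` equals `g`, whose tangential derivative jump vanishes,
and whose divergence jump vanishes. -/
theorem statement0 (n : Fin 2 → ℝ) (hn : dot n n = 1)
    (t : Fin 2 → ℝ) (ht : t = ![n 1, -(n 0)])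
    (Ap Am : Matrix (Fin 2) (Fin 2) ℝ) (qp qm : ℝ) (g : Fin 2 → ℝ)
    (hstress : (sig 1 Ap qp).mulVec n - (sig 1 Am qm).mulVec n = g)
    (htang : Ap.mulVec t = Am.mulVec t)
    (htr : Ap.trace = Am.trace) :
    dot n ((Ap - Am).mulVec n) = 0 ∧
    dot n ((Ap - Am).mulVec t) = 0 ∧
    dot t ((Ap - Am).mulVec n) = dot g t ∧
    dot t ((Ap - Am).mulVec t) = 0 ∧
    qp - qm = -(dot g n) := by
  subst ht
  have h0 := congrFun hstress 0
  have h1 := congrFun hstress 1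
  have t0 := congrFun htang 0
  have t1 := congrFun htang 1
  simp [sig, eps, dot, Matrix.mulVec, dotProduct, Fin.sum_univ_two,
    Matrix.one_apply, Matrix.trace, Matrix.diag, Matrix.transpose_apply,
    Matrix.sub_apply, Matrix.smul_apply, Matrix.add_apply] at h0 h1 t0 t1 htr hn ⊢
  refine ⟨?_, ?_, ?_, ?_, ?_⟩
  · linear_combination (n 0 ^ 2 + n 1 ^ 2) * htr - n 1 * t0 + n 0 * t1
  · linear_combination n 0 * t0 + n 1 * t1
  · linear_combination n 1 * h0 - n 0 * h1 - n 0 * t0 - n 1 * t1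
  · linear_combination n 1 * t0 - n 0 * t1
  · linear_combination -(n 0) * h0 - n 1 * h1 + 2 * ((n 0 ^ 2 + n 1 ^ 2) * htr - n 1 * t0 + n 0 * t1) - (qp - qm) * hn

end StokesIFE
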